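/- For every N >= 2: if an FTNS system is FT(N-1)S strongly hyperbolic (i.e. for some choice of reduction parameters there exist M' > 0 and, for each unit s in R^3, a Hermitian H(s) with H(s) P_{N-1}(s) = P_{N-1}(s)* H(s) and M'^{-1} I <= H(s) <= M' I), then the system is FTNS strongly hyperbolic: there exist M > 0 and, for each unit s, a Hermitian H_N(s) with H_N(s) P_N(s) = P_N(s)* H_N(s) and M^{-1} I <= H_N(s) <= M I; one may take M = M' and H_N(s) equal to the diagonal block of H(s) corresponding to the components (s^i d_i, v^1, ..., v^{N-1}) after the orthogonal change of variables splitting d_i into its components parallel and orthogonal to s. -/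

import Mathlib

open Matrix
open scoped ComplexOrder

/-- The Loewner order `A ≤ B` for complex matrices: `B - A` is positive semidefinite. -/
def loewnerLE {n : Type*} [Fintype n] (A B : Matrix n n ℂ) : Prop := (B - A).PosSemidef

/-- Index type for the FTNS state `(v⁰, …, v^{N-1})`. -/
abbrev IN (N : ℕ) (n : ℕ → ℕ) : Type := Σ μ : Fin N, Fin (n μ)

/-- Index type for the FT(N-1)S reduction state `(dᵢ; v⁰, v¹, …, v^{N-1})`. -/
abbrev INm1 (N : ℕ) (n : ℕ → ℕ) : Type := (Fin 3 × Fin (n 0)) ⊕ IN N n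

variable (N : ℕ) (n : ℕ → ℕ)
  (A : (μ ν : ℕ) → (Fin (μ - ν + 1) → Fin 3) → Matrix (Fin (n μ)) (Fin (n ν)) ℂ)
  (A' : (μ : ℕ) → Matrix (Fin (n μ)) (Fin (n (μ + 1))) ℂ)
  (B10 : (μ : ℕ) → (Fin μ → Fin 3) → Matrix (Fin (n μ)) (Fin (n 0)) ℂ)
  (D0 : Fin 3 → Matrix (Fin (n 0)) (Fin (n 0)) ℂ)
  (Dbar0 : Fin 3 → Fin 3 → Matrix (Fin (n 0)) (Fin (n 0)) ℂ)
  (Dd : Fin 3 → Fin 3 → Matrix (Fin (n 0)) (Fin (n 0)) ℂ)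
  (Dbard : Fin 3 → Fin 3 → Fin 3 → Matrix (Fin (n 0)) (Fin (n 0)) ℂ)
  (DH : (μ : ℕ) → (Fin μ → Fin 3) → Matrix (Fin (n μ)) (Fin (n 0)) ℂ)
  (DbarH : (μ : ℕ) → (Fin (μ - 1) → Fin 3) → Fin 3 → Fin 3 →
    Matrix (Fin (n μ)) (Fin (n 0)) ℂ)

/-- The FTNS principal symbol `P_N(s)`: the `(μ,ν)` block is
`(A^μ_ν)^{k₁…k_{μ-ν+1}} s_{k₁} ⋯ s_{k_{μ-ν+1}}` for `ν ≤ μ`, `A^μ_{μ+1}` for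
`ν = μ+1`, and `0` otherwise. -/
noncomputable def PN (s : Fin 3 → ℝ) : Matrix (IN N n) (IN N n) ℂ :=
  Matrix.of fun r c =>
    if h1 : (c.1 : ℕ) ≤ (r.1 : ℕ) then
      ∑ k : Fin ((r.1 : ℕ) - (c.1 : ℕ) + 1) → Fin 3,
        (∏ t, (s (k t) : ℂ)) * A r.1 c.1 k r.2 c.2
    else if h2 : (c.1 : ℕ) = (r.1 : ℕ) + 1 then
      A' r.1 r.2 (Fin.cast (congrArg n h2) c.2)
    else 0

/-- The principal symbol `P_{N-1}(s)` of the FT(N-1)S reduction, in the variables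
`(v⁰, dᵢ, v¹, …, v^{N-1})`, with reduction parameters
`D⁰, D̄⁰, Dᵢ^k, D̄ᵢ^{kj}, D^μ, D̄^μ`. -/
noncomputable def PNm1 (s : Fin 3 → ℝ) : Matrix (INm1 N n) (INm1 N n) ℂ :=
  Matrix.of fun r c =>
    match r, c with
    | Sum.inl (i, m), Sum.inl (j, m') =>
        (s i : ℂ) * A 0 0 (fun _ => j) m m' + ∑ k, (s k : ℂ) * Dbard i k j m m'
    | Sum.inl (i, m), Sum.inr ⟨ν, q⟩ =>
        if h0 : (ν : ℕ) = 0 then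
          ∑ k, (s k : ℂ) *
            ((if i = k then B10 0 Fin.elim0 else 0) + Dd i k) m (Fin.cast (congrArg n h0) q)
        else if h1 : (ν : ℕ) = 1 then
          (s i : ℂ) * A' 0 m (Fin.cast (congrArg n h1) q)
        else 0
    | Sum.inr ⟨μ, m⟩, Sum.inl (j, m') =>
        if h0 : (μ : ℕ) = 0 then
          ∑ k, (s k : ℂ) * Dbar0 k j (Fin.cast (congrArg n h0) m) m'
        else
          (∑ K : Fin (μ : ℕ) → Fin 3, (∏ t, (s (K t) : ℂ)) *
              A μ 0 (fun t : Fin ((μ : ℕ) - 0 + 1) =>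
                if h : (t : ℕ) < (μ : ℕ) then K ⟨t, h⟩ else j) m m')
            + (∑ K : Fin ((μ : ℕ) - 1) → Fin 3, ∑ a, (∏ t, (s (K t) : ℂ)) * (s a : ℂ) *
                DbarH μ K a j m m')
    | Sum.inr ⟨μ, m⟩, Sum.inr ⟨ν, q⟩ =>
        if h0 : (μ : ℕ) = 0 then
          (if hc : (ν : ℕ) = 0 then
            ∑ k, (s k : ℂ) *
              (A 0 0 (fun _ => k) + D0 k) (Fin.cast (congrArg n h0) m)
                (Fin.cast (congrArg n hc) q)
          else 0)
        else if hc : (ν : ℕ) = 0 then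
          ∑ K : Fin (μ : ℕ) → Fin 3, (∏ t, (s (K t) : ℂ)) *
            ((B10 μ K + DH μ K) m (Fin.cast (congrArg n hc) q))
        else PN N n A A' s ⟨μ, m⟩ ⟨ν, q⟩

/-- The isometric embedding of the components `(s^i dᵢ, v¹, …, v^{N-1})` into the
FT(N-1)S state space; compressing a matrix on the FT(N-1)S state space by this embedding
yields its diagonal block corresponding to `(s^i dᵢ, v¹, …, v^{N-1})` in the orthogonal
change of variables splitting `dᵢ` into components parallel and orthogonal to `s`. -/
noncomputable def JN (s : Fin 3 → ℝ) : Matrix (INm1 N n) (IN N n) ℂ :=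
  Matrix.of fun r c =>
    match r with
    | Sum.inl (i, m) =>
        if h : (c.1 : ℕ) = 0 then
          (s i : ℂ) * (if m = Fin.cast (congrArg n h) c.2 then 1 else 0)
        else 0
    | Sum.inr ⟨μ, m⟩ =>
        if (μ : ℕ) = 0 then 0
        else if h : μ = c.1 then
          (if m = Fin.cast (congrArg (fun x : Fin N => n (x : ℕ)) h).symm c.2
            then 1 else 0)
        else 0

open Matrix
open scoped ComplexOrder

lemma JN_isometry (hN : 1 ≤ N) (s : Fin 3 → ℝ) (hs : (∑ i, s i ^ 2) = 1) :
    (JN N n s)ᴴ * JN N n s = 1 := by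
  ext c c'
  rw [mul_apply]
  rw [Fintype.sum_sum_type]
  obtain ⟨ν, q⟩ := c
  obtain ⟨ν', q'⟩ := c'
  by_cases hν : (ν : ℕ) = 0
  · have : ν = ⟨0, hN⟩ := Fin.ext hν
    subst this
    by_cases hν' : (ν' : ℕ) = 0
    · have : ν' = ⟨0, hN⟩ := Fin.ext hν'
      subst this
      rw [Fintype.sum_prod_type]
      have hinr : ∑ x : IN N n,
          (JN N n s)ᴴ (⟨⟨0, hN⟩, q⟩ : IN N n) (Sum.inr x) * JN N n s (Sum.inr x) (⟨⟨0, hN⟩, q'⟩ : IN N n) = 0 := by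
        apply Finset.sum_eq_zero
        rintro ⟨μ, p⟩ -
        simp only [conjTranspose_apply, JN, of_apply]
        by_cases hμ : (μ : ℕ) = 0
        · rw [if_pos hμ]; simp
        · rw [if_neg hμ]
          rw [dif_neg (by rintro rfl; exact hμ rfl)]
          simp
      rw [hinr, add_zero]
      have hinl : ∀ i : Fin 3, ∑ m : Fin (n 0),
          (JN N n s)ᴴ (⟨⟨0, hN⟩, q⟩ : IN N n) (Sum.inl (i, m)) * JN N n s (Sum.inl (i, m)) (⟨⟨0, hN⟩, q'⟩ : IN N n)
          = (s i : ℂ) * (s i : ℂ) * (if q = q' then 1 else 0) := by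
        intro i
        rw [Finset.sum_eq_single q]
        · simp only [conjTranspose_apply, JN, of_apply]
          simp only [dite_true, Fin.cast_eq_self, if_pos rfl, mul_one, star_mul',
            Complex.conj_ofReal]
          split_ifs <;> simp <;> ring
        · rintro m - hm
          simp only [conjTranspose_apply, JN, of_apply]
          simp only [dite_true, Fin.cast_eq_self]
          rw [if_neg hm]
          simp
        · intro h; exact absurd (Finset.mem_univ q) h
      rw [Finset.sum_congr rfl (fun i _ => hinl i), ← Finset.sum_mul]
      have h1 : (∑ i : Fin 3, ((s i : ℂ) * (s i : ℂ))) = 1 := by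
        have := congrArg (fun x : ℝ => (x : ℂ)) hs
        push_cast at this
        simpa [pow_two] using this
      rw [h1, one_mul, one_apply]
      by_cases hq : q = q'
      · subst hq; simp
      · rw [if_neg hq, if_neg (by simp [Sigma.mk.inj_iff, hq])]
    · -- ν = 0, ν' ≠ 0 : both sides zero
      have hL : ∑ a : Fin 3 × Fin (n 0),
          (JN N n s)ᴴ (⟨⟨0, hN⟩, q⟩ : IN N n) (Sum.inl a) * JN N n s (Sum.inl a) (⟨ν', q'⟩ : IN N n) = 0 := by
        apply Finset.sum_eq_zero
        rintro ⟨i, m⟩ -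
        simp only [conjTranspose_apply, JN, of_apply]
        rw [dif_neg hν']
        simp
      have hR : ∑ x : IN N n,
          (JN N n s)ᴴ (⟨⟨0, hN⟩, q⟩ : IN N n) (Sum.inr x) * JN N n s (Sum.inr x) (⟨ν', q'⟩ : IN N n) = 0 := by
        apply Finset.sum_eq_zero
        rintro ⟨μ, p⟩ -
        simp only [conjTranspose_apply, JN, of_apply]
        by_cases hμ : (μ : ℕ) = 0
        · rw [if_pos hμ]; simp
        · rw [if_neg hμ, dif_neg (by rintro rfl; exact hμ rfl)]
          simp
      rw [hL, hR, add_zero, one_apply,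
        if_neg (by simp [Sigma.mk.inj_iff]; rintro rfl; exact fun _ => hν' rfl)]
  · -- ν ≠ 0
    have hL : ∑ a : Fin 3 × Fin (n 0),
        (JN N n s)ᴴ (⟨ν, q⟩ : IN N n) (Sum.inl a) * JN N n s (Sum.inl a) (⟨ν', q'⟩ : IN N n) = 0 := by
      apply Finset.sum_eq_zero
      rintro ⟨i, m⟩ -
      simp only [conjTranspose_apply, JN, of_apply]
      rw [dif_neg hν]
      simp
    rw [hL, zero_add]
    by_cases hνν : ν = ν'
    · subst hνν
      rw [Finset.sum_eq_single (⟨ν, q⟩ : IN N n)]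
      · simp only [conjTranspose_apply, JN, of_apply, hν, if_false, dite_true,
          Fin.cast_eq_self, eq_self_iff_true, if_true, star_one, one_mul, one_apply]
        by_cases hq : q = q'
        · subst hq; simp
        · rw [if_neg hq, if_neg (by simp [Sigma.mk.inj_iff, hq])]
      · rintro ⟨μ, p⟩ - hb
        simp only [conjTranspose_apply, JN, of_apply]
        by_cases hμ : (μ : ℕ) = 0
        · rw [if_pos hμ]; simp
        · by_cases hμν : μ = ν
          · subst hμν
            simp only [hμ, if_false, dite_true, Fin.cast_eq_self]
            rw [if_neg (by rintro rfl; exact hb rfl)]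
            simp
          · rw [if_neg hμ, dif_neg hμν]; simp
      · intro h; exact absurd (Finset.mem_univ _) h
    · rw [one_apply, if_neg (by simp [Sigma.mk.inj_iff, hνν])]
      apply Finset.sum_eq_zero
      rintro ⟨μ, p⟩ -
      simp only [conjTranspose_apply, JN, of_apply]
      by_cases hμ : (μ : ℕ) = 0
      · rw [if_pos hμ]; simp
      · rw [if_neg hμ]
        by_cases hμν : μ = ν
        · subst hμν
          rw [dif_neg hνν]
          simp
        · rw [dif_neg hμν]; simp

lemma antisym₂ {ι : Type*} [Fintype ι] (w : ι → ℂ) (f : ι → ι → ℂ)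
    (hf : ∀ a b, f a b = - f b a) : ∑ a, ∑ b, w a * w b * f a b = 0 := by
  have h : (∑ a, ∑ b, w a * w b * f a b) = - ∑ a, ∑ b, w a * w b * f a b := by
    calc (∑ a, ∑ b, w a * w b * f a b) = ∑ b, ∑ a, w a * w b * f a b := Finset.sum_comm
    _ = ∑ b, ∑ a, -(w b * w a * f b a) := by
        refine Finset.sum_congr rfl fun b _ => Finset.sum_congr rfl fun a _ => ?_
        rw [hf a b]; ring
    _ = - ∑ a, ∑ b, w a * w b * f a b := by
        simp [Finset.sum_neg_distrib]
  linear_combination h / 2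

lemma JN_row_inl (hN : 1 ≤ N) (s : Fin 3 → ℝ) (i : Fin 3) (m : Fin (n 0)) (G : IN N n → ℂ) :
    ∑ x : IN N n, JN N n s (Sum.inl (i, m)) x * G x = (s i : ℂ) * G ⟨⟨0, hN⟩, m⟩ := by
  rw [Finset.sum_eq_single (⟨⟨0, hN⟩, m⟩ : IN N n)]
  · simp only [JN, of_apply, dite_true, Fin.cast_eq_self, if_pos rfl, if_true, mul_one]
  · rintro ⟨μ, p⟩ - hb
    simp only [JN, of_apply]
    by_cases hμ : (μ : ℕ) = 0
    · have : μ = ⟨0, hN⟩ := Fin.ext hμ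
      subst this
      simp only [dite_true, Fin.cast_eq_self]
      rw [if_neg (by rintro rfl; exact hb rfl), mul_zero, zero_mul]
    · rw [dif_neg hμ, zero_mul]
  · intro h; exact absurd (Finset.mem_univ _) h

lemma JN_row_inr (s : Fin 3 → ℝ) {μ : Fin N} (hμ : (μ : ℕ) ≠ 0) (m : Fin (n μ))
    (G : IN N n → ℂ) :
    ∑ x : IN N n, JN N n s (Sum.inr ⟨μ, m⟩) x * G x = G ⟨μ, m⟩ := by
  rw [Finset.sum_eq_single (⟨μ, m⟩ : IN N n)]
  · simp only [JN, of_apply, hμ, if_false, dite_true, Fin.cast_eq_self, if_pos rfl, if_true, one_mul]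
  · rintro ⟨μ', p⟩ - hb
    simp only [JN, of_apply]
    rw [if_neg hμ]
    by_cases hμμ : μ = μ'
    · subst hμμ
      simp only [dite_true, Fin.cast_eq_self]
      rw [if_neg (fun h => hb (by rw [h])), zero_mul]
    · rw [dif_neg hμμ, zero_mul]
  · intro h; exact absurd (Finset.mem_univ _) h

lemma JN_row_inr0 (s : Fin 3 → ℝ) {μ : Fin N} (hμ : (μ : ℕ) = 0) (m : Fin (n μ))
    (G : IN N n → ℂ) :
    ∑ x : IN N n, JN N n s (Sum.inr ⟨μ, m⟩) x * G x = 0 := by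
  apply Finset.sum_eq_zero
  rintro ⟨μ', p⟩ -
  simp only [JN, of_apply, hμ, if_true, zero_mul]

lemma JN_col_zero (hN : 1 ≤ N) (s : Fin 3 → ℝ) (q : Fin (n 0)) (F : INm1 N n → ℂ) :
    ∑ x : INm1 N n, F x * JN N n s x (⟨⟨0, hN⟩, q⟩ : IN N n)
      = ∑ j : Fin 3, F (Sum.inl (j, q)) * (s j : ℂ) := by
  rw [Fintype.sum_sum_type]
  have h2 : ∑ x : IN N n, F (Sum.inr x) * JN N n s (Sum.inr x) (⟨⟨0, hN⟩, q⟩ : IN N n) = 0 := by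
    apply Finset.sum_eq_zero
    rintro ⟨μ', p⟩ -
    simp only [JN, of_apply]
    by_cases hμ' : (μ' : ℕ) = 0
    · rw [if_pos hμ', mul_zero]
    · rw [if_neg hμ', dif_neg (by rintro rfl; exact hμ' rfl), mul_zero]
  rw [h2, add_zero, Fintype.sum_prod_type]
  refine Finset.sum_congr rfl fun j _ => ?_
  rw [Finset.sum_eq_single q]
  · simp only [JN, of_apply, dite_true, Fin.cast_eq_self, if_pos rfl, if_true, mul_one]
  · rintro m' - hm'
    simp only [JN, of_apply, dite_true, Fin.cast_eq_self]
    rw [if_neg hm', mul_zero, mul_zero]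
  · intro h; exact absurd (Finset.mem_univ _) h

lemma JN_col_pos (s : Fin 3 → ℝ) {ν : Fin N} (hν : (ν : ℕ) ≠ 0) (q : Fin (n ν))
    (F : INm1 N n → ℂ) :
    ∑ x : INm1 N n, F x * JN N n s x (⟨ν, q⟩ : IN N n) = F (Sum.inr ⟨ν, q⟩) := by
  rw [Fintype.sum_sum_type]
  have h1 : ∑ a : Fin 3 × Fin (n 0), F (Sum.inl a) * JN N n s (Sum.inl a) (⟨ν, q⟩ : IN N n) = 0 := by
    apply Finset.sum_eq_zero
    rintro ⟨j, m'⟩ -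
    simp only [JN, of_apply]
    rw [dif_neg hν, mul_zero]
  rw [h1, zero_add, Finset.sum_eq_single (⟨ν, q⟩ : IN N n)]
  · simp only [JN, of_apply, hν, if_false, dite_true, Fin.cast_eq_self, if_pos rfl, if_true, mul_one]
  · rintro ⟨μ', p⟩ - hb
    simp only [JN, of_apply]
    by_cases hμ' : (μ' : ℕ) = 0
    · rw [if_pos hμ', mul_zero]
    · rw [if_neg hμ']
      by_cases hμν : μ' = ν
      · subst hμν
        simp only [dite_true, Fin.cast_eq_self]
        rw [if_neg (by rintro rfl; exact hb rfl), mul_zero]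
      · rw [dif_neg hμν, mul_zero]
  · intro h; exact absurd (Finset.mem_univ _) h

lemma antisym₂' (w : Fin 3 → ℂ) (g : Fin 3 → Fin 3 → ℂ)
    (hg : ∀ a b, g a b = -g b a) :
    ∑ j : Fin 3, (∑ k : Fin 3, w k * g k j) * w j = 0 := by
  calc ∑ j : Fin 3, (∑ k : Fin 3, w k * g k j) * w j
      = ∑ j : Fin 3, ∑ k : Fin 3, w j * w k * g k j := by
        refine Finset.sum_congr rfl fun j _ => ?_
        rw [Finset.sum_mul]
        exact Finset.sum_congr rfl fun k _ => by ring
    _ = 0 := antisym₂ w (fun j k => g k j) (fun a b => by rw [hg b a])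

lemma antisym₂'' (w : Fin 3 → ℂ) {κ : Type*} [Fintype κ] (P : κ → ℂ)
    (g : κ → Fin 3 → Fin 3 → ℂ) (hg : ∀ K a b, g K a b = -g K b a) :
    ∑ j : Fin 3, (∑ K : κ, ∑ a : Fin 3, P K * w a * g K a j) * w j = 0 := by
  calc ∑ j : Fin 3, (∑ K : κ, ∑ a : Fin 3, P K * w a * g K a j) * w j
      = ∑ j : Fin 3, ∑ K : κ, ∑ a : Fin 3, P K * w a * g K a j * w j := by
        refine Finset.sum_congr rfl fun j _ => ?_
        rw [Finset.sum_mul]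
        exact Finset.sum_congr rfl fun K _ => by rw [Finset.sum_mul]
    _ = ∑ K : κ, ∑ j : Fin 3, ∑ a : Fin 3, P K * w a * g K a j * w j := Finset.sum_comm
    _ = ∑ K : κ, ∑ a : Fin 3, ∑ j : Fin 3, w a * w j * (P K * g K a j) := by
        refine Finset.sum_congr rfl fun K _ => ?_
        rw [Finset.sum_comm]
        exact Finset.sum_congr rfl fun a _ => Finset.sum_congr rfl fun j _ => by ring
    _ = 0 := Finset.sum_eq_zero fun K _ =>
        antisym₂ w (fun a j => P K * g K a j) (fun a b => by rw [hg K a b]; ring)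

lemma sum_snoc (μ : ℕ) (F : (Fin (μ + 1) → Fin 3) → ℂ) :
    ∑ k : Fin (μ + 1) → Fin 3, F k = ∑ j : Fin 3, ∑ K : Fin μ → Fin 3, F (Fin.snoc K j) := by
  calc ∑ k : Fin (μ + 1) → Fin 3, F k
      = ∑ p : Fin 3 × (Fin μ → Fin 3), F (Fin.snocEquiv (fun _ => Fin 3) p) :=
        (Fintype.sum_equiv (Fin.snocEquiv (fun _ => Fin 3)) _ _ fun p => rfl).symm
    _ = ∑ j : Fin 3, ∑ K : Fin μ → Fin 3, F (Fin.snoc K j) :=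
        Fintype.sum_prod_type _

lemma snoc_eq_ext (μ : ℕ) (K : Fin μ → Fin 3) (j : Fin 3) :
    (Fin.snoc K j : Fin (μ + 1) → Fin 3)
      = fun t : Fin (μ + 1) => if h : (t : ℕ) < μ then K ⟨t, h⟩ else j := by
  funext t
  by_cases h : (t : ℕ) < μ
  · rw [dif_pos h]
    exact Fin.snoc_castSucc (α := fun _ => Fin 3) (p := K) (x := j) (i := ⟨t, h⟩)
  · rw [dif_neg h]
    obtain ⟨tv, hlt⟩ := t
    have : tv = μ := by simp at h; omega
    subst this
    exact Fin.snoc_last (α := fun _ => Fin 3) (x := j) (p := K)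

lemma prod_snoc (s : Fin 3 → ℝ) (μ : ℕ) (K : Fin μ → Fin 3) (j : Fin 3) :
    (∏ t : Fin (μ + 1), ((s ((Fin.snoc K j : Fin (μ+1) → Fin 3) t) : ℂ)))
      = (∏ t : Fin μ, (s (K t) : ℂ)) * (s j : ℂ) := by
  rw [Fin.prod_univ_castSucc]
  simp [Fin.snoc_castSucc, Fin.snoc_last]

lemma sum_snoc' (μ : ℕ) (F : (Fin (μ - 0 + 1) → Fin 3) → ℂ) :
    ∑ k : Fin (μ - 0 + 1) → Fin 3, F k
      = ∑ j : Fin 3, ∑ K : Fin μ → Fin 3,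
          F (fun t : Fin (μ - 0 + 1) => if h : (t : ℕ) < μ then K ⟨t, h⟩ else j) := by
  refine (sum_snoc μ F).trans ?_
  refine Finset.sum_congr rfl fun j _ => Finset.sum_congr rfl fun K _ => ?_
  exact congrArg F (snoc_eq_ext μ K j)

lemma prod_ext (s : Fin 3 → ℝ) (μ : ℕ) (K : Fin μ → Fin 3) (j : Fin 3) :
    (∏ t : Fin (μ - 0 + 1), ((s (if h : (t : ℕ) < μ then K ⟨t, h⟩ else j) : ℝ) : ℂ))
      = (∏ t : Fin μ, ((s (K t) : ℝ) : ℂ)) * ((s j : ℝ) : ℂ) := by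
  refine Eq.trans ?_ (prod_snoc s μ K j)
  refine Finset.prod_congr rfl fun t _ => ?_
  rw [snoc_eq_ext]

set_option maxHeartbeats 1000000 in
lemma JN_intertwine (hN : 1 ≤ N)
    (hDbar0 : ∀ k j, Dbar0 k j = -Dbar0 j k)
    (hDbard : ∀ i k j, Dbard i k j = -Dbard i j k)
    (hDbarH : ∀ μ K a j, DbarH μ K a j = -DbarH μ K j a)
    (s : Fin 3 → ℝ) :
    JN N n s * PN N n A A' s
      = PNm1 N n A A' B10 D0 Dbar0 Dd Dbard DH DbarH s * JN N n s := by
  ext r c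
  rw [mul_apply, mul_apply]
  obtain ⟨ν, q⟩ := c
  rcases r with ⟨i, m⟩ | ⟨μ, m⟩
  · rw [JN_row_inl N n hN s i m]
    by_cases hν0 : (ν : ℕ) = 0
    · have hE : ν = ⟨0, hN⟩ := Fin.ext hν0
      subst hE
      rw [JN_col_zero N n hN s q]
      simp only [PN, PNm1, of_apply]
      rw [dif_pos (le_refl 0)]
      have hL : ∑ x : Fin (0 - 0 + 1) → Fin 3, (∏ t : Fin (0 - 0 + 1), ((s (x t) : ℝ) : ℂ)) * A 0 0 x m q
          = ∑ j : Fin 3, ((s j : ℝ) : ℂ) * A 0 0 (fun _ => j) m q := by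
        haveI : Subsingleton (Fin (0 - 0 + 1)) := inferInstanceAs (Subsingleton (Fin 1))
        haveI : Inhabited (Fin (0 - 0 + 1)) := inferInstanceAs (Inhabited (Fin 1))
        refine (Fintype.sum_equiv
          (⟨fun j _ => j, fun k => k default,
            fun j => rfl, fun k => funext fun x => congrArg k (Subsingleton.elim _ _)⟩ :
            Fin 3 ≃ ((Fin (0 - 0 + 1)) → Fin 3)) _ _ fun j => ?_).symm
        simp only [Equiv.coe_fn_mk]
        rw [Finset.prod_const]
        norm_num
      rw [hL, Finset.mul_sum]
      have split : ∀ x : Fin 3,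
          (((s i : ℝ) : ℂ) * A 0 0 (fun _ => x) m q + ∑ k, ((s k : ℝ) : ℂ) * Dbard i k x m q) * ((s x : ℝ) : ℂ)
          = ((s i : ℝ) : ℂ) * (((s x : ℝ) : ℂ) * A 0 0 (fun _ => x) m q)
            + ∑ k, ((s x : ℝ) : ℂ) * ((s k : ℝ) : ℂ) * Dbard i k x m q := by
        intro x
        rw [add_mul, Finset.sum_mul]
        congr 1
        · ring
        · exact Finset.sum_congr rfl fun k _ => by ring
      rw [Finset.sum_congr rfl fun x _ => split x, Finset.sum_add_distrib,
        antisym₂ (fun a => ((s a : ℝ) : ℂ)) (fun a b => Dbard i b a m q)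
          (fun a b => by
            show Dbard i b a m q = -(Dbard i a b m q)
            rw [hDbard i b a]; simp), add_zero]
    · by_cases hν1 : (ν : ℕ) = 1
      · have hlt : 1 < N := hν1 ▸ ν.isLt
        have hE : ν = ⟨1, hlt⟩ := Fin.ext hν1
        subst hE
        rw [JN_col_pos N n s (by norm_num) q]
        simp only [PN, PNm1, of_apply]
        norm_num
      · rw [JN_col_pos N n s hν0 q]
        simp only [PN, PNm1, of_apply]
        rw [dif_neg (by omega), dif_neg (by omega), dif_neg hν0, dif_neg hν1, mul_zero]
  · by_cases hμ0 : (μ : ℕ) = 0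
    · have hE : μ = ⟨0, hN⟩ := Fin.ext hμ0
      subst hE
      rw [JN_row_inr0 N n s rfl m]
      by_cases hν0 : (ν : ℕ) = 0
      · have hE : ν = ⟨0, hN⟩ := Fin.ext hν0
        subst hE
        rw [JN_col_zero N n hN s q]
        simp only [PNm1, of_apply, dite_true, Fin.cast_eq_self]
        symm
        exact antisym₂' (fun k => ((s k : ℝ) : ℂ)) (fun k j => Dbar0 k j m q)
          (fun a b => by show Dbar0 a b m q = -(Dbar0 b a m q); rw [hDbar0 a b]; simp)
      · rw [JN_col_pos N n s hν0 q]
        simp only [PNm1, of_apply, dite_true]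
        rw [dif_neg hν0]
    · rw [JN_row_inr N n s hμ0 m]
      by_cases hν0 : (ν : ℕ) = 0
      · have hE : ν = ⟨0, hN⟩ := Fin.ext hν0
        subst hE
        rw [JN_col_zero N n hN s q]
        simp only [PN, PNm1, of_apply, dif_neg hμ0]
        rw [dif_pos (Nat.zero_le _)]
        rw [sum_snoc' (↑μ : ℕ) (fun k => (∏ t, ((s (k t) : ℝ) : ℂ)) * A (↑μ : ℕ) 0 k m q)]
        rw [Finset.sum_congr rfl fun j (_ : j ∈ Finset.univ) =>
          add_mul (∑ K : Fin (↑μ : ℕ) → Fin 3, (∏ t : Fin (↑μ : ℕ), ((s (K t) : ℝ) : ℂ)) *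
              A (↑μ : ℕ) 0 (fun t => if h : (↑t : ℕ) < (↑μ : ℕ) then K ⟨↑t, h⟩ else j) m q)
            (∑ K : Fin ((↑μ : ℕ) - 1) → Fin 3, ∑ a : Fin 3,
              (∏ t : Fin ((↑μ : ℕ) - 1), ((s (K t) : ℝ) : ℂ)) * ((s a : ℝ) : ℂ) *
                DbarH (↑μ : ℕ) K a j m q) ((s j : ℝ) : ℂ),
          Finset.sum_add_distrib,
          antisym₂'' (fun a => ((s a : ℝ) : ℂ))
            (fun K : Fin ((↑μ : ℕ) - 1) → Fin 3 => (∏ t : Fin ((↑μ : ℕ) - 1), ((s (K t) : ℝ) : ℂ)))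
            (fun K a j => DbarH (↑μ : ℕ) K a j m q)
            (fun K a b => by
              show DbarH (↑μ : ℕ) K a b m q = -(DbarH (↑μ : ℕ) K b a m q)
              rw [hDbarH (↑μ : ℕ) K a b]; simp),
          add_zero]
        simp only []
        refine Finset.sum_congr rfl fun j _ => ?_
        rw [Finset.sum_mul]
        refine Finset.sum_congr rfl fun K _ => ?_
        rw [prod_ext s (↑μ : ℕ) K j]
        ring
      · rw [JN_col_pos N n s hν0 q]
        simp only [PNm1, of_apply]
        rw [dif_neg hμ0, dif_neg hν0]
/-- for `N ≥ 2`, FT(N-1)S strong hyperbolicity implies FTNS strong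
hyperbolicity; one may take `M = M'` and `H_N(s)` the diagonal block of `H(s)`
corresponding to `(s^i dᵢ, v¹, …, v^{N-1})`. -/
theorem stmt_4 (hN : 2 ≤ N)
    (hDbar0 : ∀ k j, Dbar0 k j = -Dbar0 j k)
    (hDbard : ∀ i k j, Dbard i k j = -Dbard i j k)
    (hDbarH : ∀ μ K a j, DbarH μ K a j = -DbarH μ K j a)
    (M' : ℝ) (hM' : 0 < M')
    (H : (Fin 3 → ℝ) → Matrix (INm1 N n) (INm1 N n) ℂ)
    (hH : ∀ s : Fin 3 → ℝ, (∑ i, s i ^ 2) = 1 →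
      (H s).IsHermitian ∧
      H s * PNm1 N n A A' B10 D0 Dbar0 Dd Dbard DH DbarH s
        = (PNm1 N n A A' B10 D0 Dbar0 Dd Dbard DH DbarH s)ᴴ * H s ∧
      loewnerLE (((M'⁻¹ : ℝ) : ℂ) • 1) (H s) ∧
      loewnerLE (H s) (((M' : ℝ) : ℂ) • 1)) :
    (∃ M : ℝ, 0 < M ∧ ∀ s : Fin 3 → ℝ, (∑ i, s i ^ 2) = 1 →
      ∃ HN : Matrix (IN N n) (IN N n) ℂ,
        HN.IsHermitian ∧
        HN * PN N n A A' s = (PN N n A A' s)ᴴ * HN ∧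
        loewnerLE (((M⁻¹ : ℝ) : ℂ) • 1) HN ∧
        loewnerLE HN (((M : ℝ) : ℂ) • 1)) ∧
    (∀ s : Fin 3 → ℝ, (∑ i, s i ^ 2) = 1 →
      ((JN N n s)ᴴ * H s * JN N n s).IsHermitian ∧
      (JN N n s)ᴴ * H s * JN N n s * PN N n A A' s
        = (PN N n A A' s)ᴴ * ((JN N n s)ᴴ * H s * JN N n s) ∧
      loewnerLE (((M'⁻¹ : ℝ) : ℂ) • 1) ((JN N n s)ᴴ * H s * JN N n s) ∧
      loewnerLE ((JN N n s)ᴴ * H s * JN N n s) (((M' : ℝ) : ℂ) • 1)) := by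
  have hN1 : 1 ≤ N := le_trans (by norm_num) hN
  have key : ∀ s : Fin 3 → ℝ, (∑ i, s i ^ 2) = 1 →
      ((JN N n s)ᴴ * H s * JN N n s).IsHermitian ∧
      (JN N n s)ᴴ * H s * JN N n s * PN N n A A' s
        = (PN N n A A' s)ᴴ * ((JN N n s)ᴴ * H s * JN N n s) ∧
      loewnerLE (((M'⁻¹ : ℝ) : ℂ) • 1) ((JN N n s)ᴴ * H s * JN N n s) ∧
      loewnerLE ((JN N n s)ᴴ * H s * JN N n s) (((M' : ℝ) : ℂ) • 1) := by
    intro s hs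
    obtain ⟨hHerm, hComm, hLow1, hLow2⟩ := hH s hs
    set J := JN N n s with hJ
    set P := PN N n A A' s with hP
    set Q := PNm1 N n A A' B10 D0 Dbar0 Dd Dbard DH DbarH s with hQ
    have hiso : Jᴴ * J = 1 := JN_isometry N n hN1 s hs
    have hint : J * P = Q * J :=
      JN_intertwine N n A A' B10 D0 Dbar0 Dd Dbard DH DbarH hN1 hDbar0 hDbard hDbarH s
    have hsmul : ∀ c : ℂ, Jᴴ * (c • (1 : Matrix (INm1 N n) (INm1 N n) ℂ)) * J
        = c • (1 : Matrix (IN N n) (IN N n) ℂ) := by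
      intro c
      rw [Matrix.mul_smul, Matrix.smul_mul, Matrix.mul_one, hiso]
    have hconj : ∀ X : Matrix (INm1 N n) (INm1 N n) ℂ, X.PosSemidef → (Jᴴ * X * J).PosSemidef :=
      fun X hX => hX.conjTranspose_mul_mul_same J
    refine ⟨?_, ?_, ?_, ?_⟩
    · exact Matrix.isHermitian_conjTranspose_mul_mul J hHerm
    · calc Jᴴ * H s * J * P = Jᴴ * H s * (J * P) := by rw [Matrix.mul_assoc]
        _ = Jᴴ * H s * (Q * J) := by rw [hint]
        _ = Jᴴ * (H s * Q) * J := by rw [Matrix.mul_assoc, Matrix.mul_assoc, Matrix.mul_assoc]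
        _ = Jᴴ * (Qᴴ * H s) * J := by rw [hComm]
        _ = (Q * J)ᴴ * (H s * J) := by
            rw [Matrix.conjTranspose_mul, Matrix.mul_assoc, Matrix.mul_assoc, Matrix.mul_assoc]
        _ = (J * P)ᴴ * (H s * J) := by rw [hint]
        _ = Pᴴ * (Jᴴ * H s * J) := by
            rw [Matrix.conjTranspose_mul, Matrix.mul_assoc, Matrix.mul_assoc]
    · show (Jᴴ * H s * J - ((M'⁻¹ : ℝ) : ℂ) • 1).PosSemidef
      have h2 : Jᴴ * (H s - ((M'⁻¹ : ℝ) : ℂ) • 1) * J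
          = Jᴴ * H s * J - ((M'⁻¹ : ℝ) : ℂ) • 1 := by
        rw [Matrix.mul_sub, Matrix.sub_mul, hsmul]
      rw [← h2]
      exact hconj _ hLow1
    · show (((M' : ℝ) : ℂ) • 1 - Jᴴ * H s * J).PosSemidef
      have h2 : Jᴴ * (((M' : ℝ) : ℂ) • 1 - H s) * J
          = ((M' : ℝ) : ℂ) • 1 - Jᴴ * H s * J := by
        rw [Matrix.mul_sub, Matrix.sub_mul, hsmul]
      rw [← h2]
      exact hconj _ hLow2
  exact ⟨⟨M', hM', fun s hs => ⟨(JN N n s)ᴴ * H s * JN N n s, key s hs⟩⟩, key⟩
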